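/- In the asymmetric two-node SICA network, R_{0,2}(L_{2,1}) > R_{0,2}(0) for all L_{2,1} > 0; i.e., any positive directed coupling from node 1 to node 2 strictly increases the basic reproduction number of node 2 above its uncoupled value N₂Λ₂/(D₂μ₂). -/
import Mathlib

theorem coupling_increases_R02 (Λ₁ Λ₂ μ₁ μ₂ εS N₂ D₂ : ℝ)
    (hΛ₁ : 0 < Λ₁) (hΛ₂ : 0 < Λ₂) (hμ₁ : 0 < μ₁) (hμ₂ : 0 < μ₂)
    (hεS : 0 < εS) (hN₂ : 0 < N₂) (hD₂ : 0 < D₂) :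
    ∀ L : ℝ, 0 < L →
      N₂ / (D₂ * μ₂) * ((εS * (Λ₁ + Λ₂) * L + Λ₂ * μ₁) / (εS * L + μ₁))
        > N₂ * Λ₂ / (D₂ * μ₂) := by
  intro L hL
  have hd : 0 < εS * L + μ₁ := by positivity
  have key : Λ₂ < (εS * (Λ₁ + Λ₂) * L + Λ₂ * μ₁) / (εS * L + μ₁) := by
    rw [lt_div_iff₀ hd]
    nlinarith [mul_pos (mul_pos hεS hΛ₁) hL]
  have h : N₂ * Λ₂ / (D₂ * μ₂) = N₂ / (D₂ * μ₂) * Λ₂ := by ring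
  rw [h]
  exact mul_lt_mul_of_pos_left key (by positivity)
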